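/- arXiv:2009.13104 — 4 statements merged into one kernel-verified Lean document; each statement's English description precedes it below -/
import Mathlib

section
/- Let Q be a neutral mechanism satisfying elementary monotonicity and μ the uniform prior. Then the interim rank shares are non-increasing in rank: for any agent i, any preference P_i, and any k ∈ {1,...,n-1}, q_{i P_i(k)}(P_i) ≥ q_{i P_i(k+1)}(P_i). -/
open Finset

/-- A preference is a ranking: position `k` maps to the `k`-th ranked object.
Objects are identified with `Fin n`. -/
abbrev Pref (n : ℕ) := Fin n ≃ Fin n

/-- `π` first-order stochastically dominates `π'` with respect to `P`. -/
def FOSD {n : ℕ} (P : Pref n) (π π' : Fin n → ℝ) : Prop :=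
  ∀ ℓ : Fin n, ∑ k ∈ Finset.Iic ℓ, π' (P k) ≤ ∑ k ∈ Finset.Iic ℓ, π (P k)

/-- A share vector: a probability distribution over objects. -/
def IsShare {n : ℕ} (π : Fin n → ℝ) : Prop :=
  (∀ a, 0 ≤ π a) ∧ ∑ a, π a = 1

/-- `P'` is an `(a,b)`-swap of `P`: `a` is ranked immediately above `b` in `P`,
they are transposed in `P'`, and all other ranks coincide. -/
def IsSwap {n : ℕ} (P P' : Pref n) (a b : Fin n) : Prop :=
  ∃ (k : Fin n) (hk : k.val + 1 < n),
    P k = a ∧ P ⟨k.val + 1, hk⟩ = b ∧ P' k = b ∧ P' ⟨k.val + 1, hk⟩ = a ∧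
    ∀ j : Fin n, j ≠ k → j ≠ ⟨k.val + 1, hk⟩ → P' j = P j

/-- A mechanism: maps a preference profile to shares `Q prof i a`. -/
abbrev Mech (n : ℕ) := (Fin n → Pref n) → Fin n → Fin n → ℝ

/-- The output of the mechanism is always a bistochastic matrix. -/
def Bistochastic {n : ℕ} (Q : Mech n) : Prop :=
  ∀ prof : Fin n → Pref n,
    (∀ i a, 0 ≤ Q prof i a) ∧ (∀ i, ∑ a, Q prof i a = 1) ∧ (∀ a, ∑ i, Q prof i a = 1)

def StrategyProof {n : ℕ} (Q : Mech n) : Prop :=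
  ∀ (prof : Fin n → Pref n) (i : Fin n) (P' : Pref n),
    FOSD (prof i) (Q prof i) (Q (Function.update prof i P') i)

/-- Elementary monotonicity. -/
def ElemMono {n : ℕ} (Q : Mech n) : Prop :=
  ∀ (prof : Fin n → Pref n) (i : Fin n) (P' : Pref n) (a b : Fin n),
    IsSwap (prof i) P' a b →
      Q prof i b ≤ Q (Function.update prof i P') i b ∧
      Q (Function.update prof i P') i a ≤ Q prof i a

/-- A probability distribution on a finite type. -/
def IsDist {α : Type*} [Fintype α] (ν : α → ℝ) : Prop :=
  (∀ x, 0 ≤ ν x) ∧ ∑ x, ν x = 1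

/-- Build a full profile from agent `i`'s report and the others' profile. -/
def extendProf {n : ℕ} (i : Fin n) (Pi : Pref n)
    (pm : {j : Fin n // j ≠ i} → Pref n) : Fin n → Pref n :=
  fun j => if h : j = i then Pi else pm ⟨j, h⟩

/-- Interim share of object `a` for agent `i` reporting `Pi`, under i.i.d. prior `μ`. -/
noncomputable def interim {n : ℕ} (Q : Mech n) (μ : Pref n → ℝ) (i : Fin n)
    (Pi : Pref n) (a : Fin n) : ℝ :=
  ∑ pm : ({j : Fin n // j ≠ i} → Pref n), (∏ j, μ (pm j)) * Q (extendProf i Pi pm) i a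

/-- Ordinal Bayesian incentive compatibility with respect to prior `μ`. -/
def OBIC {n : ℕ} (Q : Mech n) (μ : Pref n → ℝ) : Prop :=
  ∀ (i : Fin n) (Pi P' : Pref n), FOSD Pi (interim Q μ i Pi) (interim Q μ i P')

/-- The uniform prior over the `n!` preferences. -/
noncomputable def unif (n : ℕ) : Pref n → ℝ := fun _ => (n.factorial : ℝ)⁻¹

/-- Neutrality: relabeling objects by `σ` (so that rank `k` of `P.trans σ` is `σ (P k)`)
permutes the shares accordingly. -/
def Neutral {n : ℕ} (Q : Mech n) : Prop :=
  ∀ (σ : Equiv.Perm (Fin n)) (prof : Fin n → Pref n) (i a : Fin n),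
    Q prof i a = Q (fun j => (prof j).trans σ) i (σ a)

theorem stmt8 {n : ℕ} (Q : Mech n) (hQ : Bistochastic Q) (hN : Neutral Q)
    (hM : ElemMono Q) (i : Fin n) (Pi : Pref n) (k : Fin n) (hk : k.val + 1 < n) :
    interim Q (unif n) i Pi (Pi ⟨k.val + 1, hk⟩) ≤ interim Q (unif n) i Pi (Pi k) := by
  classical
  set k1 : Fin n := ⟨k.val + 1, hk⟩ with hk1
  set a := Pi k with ha
  set b := Pi k1 with hb
  have hkne : k ≠ k1 := by
    intro h
    have := congrArg Fin.val h
    simp [hk1] at this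
  have hab : a ≠ b := fun h => hkne (Pi.injective h)
  set σ : Equiv.Perm (Fin n) := Equiv.swap a b with hσ
  set P' : Pref n := Pi.trans σ with hP'
  have hP'k : P' k = b := by simp [hP', hσ, ← ha, Equiv.swap_apply_left]
  have hP'k1 : P' k1 = a := by simp [hP', hσ, ← hb, Equiv.swap_apply_right]
  have hP'other : ∀ j, j ≠ k → j ≠ k1 → P' j = Pi j := by
    intro j hj1 hj2
    have h1 : Pi j ≠ a := fun h => hj1 (Pi.injective h)
    have h2 : Pi j ≠ b := fun h => hj2 (Pi.injective h)
    simp [hP', hσ, Equiv.swap_apply_of_ne_of_ne h1 h2]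
  have hswap : IsSwap Pi P' a b := ⟨k, hk, rfl, rfl, hP'k, hP'k1, hP'other⟩
  have wnn : ∀ pm : ({j : Fin n // j ≠ i} → Pref n), 0 ≤ ∏ j, unif n (pm j) := by
    intro pm
    apply Finset.prod_nonneg
    intro j _
    simp [unif]
  have step1 : interim Q (unif n) i Pi b ≤ interim Q (unif n) i P' b := by
    unfold interim
    apply Finset.sum_le_sum
    intro pm _
    apply mul_le_mul_of_nonneg_left _ (wnn pm)
    have hupd : Function.update (extendProf i Pi pm) i P' = extendProf i P' pm := by
      funext j
      by_cases h : j = i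
      · subst h; simp [Function.update, extendProf]
      · simp [Function.update, extendProf, h]
    have hprofi : extendProf i Pi pm i = Pi := by simp [extendProf]
    have := (hM (extendProf i Pi pm) i P' a b (by rw [hprofi]; exact hswap)).1
    rwa [hupd] at this
  let φ : Pref n ≃ Pref n :=
    { toFun := fun P => P.trans σ
      invFun := fun P => P.trans σ.symm
      left_inv := fun P => by ext x; simp
      right_inv := fun P => by ext x; simp }
  let e := Equiv.piCongrRight (fun _ : {j : Fin n // j ≠ i} => φ)
  have step2 : interim Q (unif n) i Pi a = interim Q (unif n) i P' b := by
    unfold interim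
    rw [← Equiv.sum_comp e
      (fun pm : ({j : Fin n // j ≠ i} → Pref n) =>
        (∏ j, unif n (pm j)) * Q (extendProf i P' pm) i b)]
    apply Finset.sum_congr rfl
    intro pm _
    have hw : (∏ j, unif n ((e pm) j)) = ∏ j, unif n (pm j) := by simp [unif]
    rw [hw]
    congr 1
    have hneu := hN σ (extendProf i Pi pm) i a
    have h1 : (fun j => (extendProf i Pi pm j).trans σ) = extendProf i P' (e pm) := by
      funext j
      by_cases h : j = i
      · subst h; simp [extendProf, hP']
      · simp [extendProf, h, e, φ]
    have h2 : σ a = b := Equiv.swap_apply_left a b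
    rw [hneu, h1, h2]
  exact step1.trans_eq step2.symm
end

section
/- Every neutral mechanism satisfying elementary monotonicity is ordinally Bayesian incentive compatible with respect to the uniform prior: for every agent i and all preferences P_i, P'_i, the interim share vector from truthfully reporting P_i first-order stochastically dominates, with respect to P_i, the interim share vector from reporting P'_i. -/
open Finset

private lemma update_extendProf {n : ℕ} (i : Fin n) (P P'' : Pref n)
    (pm : {j : Fin n // j ≠ i} → Pref n) :
    Function.update (extendProf i P pm) i P'' = extendProf i P'' pm := by
  funext j
  by_cases h : j = i <;> simp [Function.update, extendProf, h]

private lemma trans_extendProf {n : ℕ} (i : Fin n) (P : Pref n) (σ : Equiv.Perm (Fin n))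
    (pm : {j : Fin n // j ≠ i} → Pref n) :
    (fun j => (extendProf i P pm j).trans σ)
      = extendProf i (P.trans σ) (fun j => (pm j).trans σ) := by
  funext j
  by_cases h : j = i <;> simp [extendProf, h]

theorem stmt9 {n : ℕ} (Q : Mech n) (hQ : Bistochastic Q) (hN : Neutral Q)
    (hM : ElemMono Q) : OBIC Q (unif n) := by
  intro i Pi P'
  -- interim invariance under relabeling
  have keyA : ∀ (σ : Equiv.Perm (Fin n)) (P : Pref n) (a : Fin n),
      interim Q (unif n) i P a = interim Q (unif n) i (P.trans σ) (σ a) := by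
    intro σ P a
    unfold interim
    apply Fintype.sum_equiv (Equiv.piCongrRight fun _ => Equiv.mulLeft σ)
    intro pm
    have h1 : Q (extendProf i P pm) i a
        = Q (extendProf i (P.trans σ) (fun j => (pm j).trans σ)) i (σ a) := by
      rw [hN σ (extendProf i P pm) i a, trans_extendProf]
    have h2 : (fun j => (pm j).trans σ)
        = (Equiv.piCongrRight (fun _ : {j : Fin n // j ≠ i} => Equiv.mulLeft σ)) pm := by
      funext j
      simp [Equiv.Perm.mul_def]
    rw [h1, h2]
    simp [unif]
  -- the rank function
  set f : Fin n → ℝ := fun k => interim Q (unif n) i (Equiv.refl (Fin n)) k with hf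
  have hrank : ∀ (P : Pref n) (a : Fin n), interim Q (unif n) i P a = f (P.symm a) := by
    intro P a
    have := keyA P.symm P a
    rwa [Equiv.self_trans_symm] at this
  -- monotone step from elementary monotonicity
  have hstep : ∀ (k : Fin n) (hk : k.val + 1 < n), f ⟨k.val + 1, hk⟩ ≤ f k := by
    intro k hk
    set a : Fin n := k with ha
    set b : Fin n := ⟨k.val + 1, hk⟩ with hb
    have hab : a ≠ b := by
      intro h
      have := congrArg Fin.val h
      simp [ha, hb] at this
    have hswap : IsSwap (Equiv.refl (Fin n)) (Equiv.swap a b) a b := by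
      refine ⟨k, hk, rfl, rfl, Equiv.swap_apply_left a b, Equiv.swap_apply_right a b,
        fun j hj1 hj2 => ?_⟩
      have : Equiv.swap a b j = j := Equiv.swap_apply_of_ne_of_ne hj1 hj2
      simpa using this
    have hmono : interim Q (unif n) i (Equiv.refl (Fin n)) b
        ≤ interim Q (unif n) i (Equiv.swap a b) b := by
      unfold interim
      apply Finset.sum_le_sum
      intro pm _
      have hw : 0 ≤ ∏ j, unif n (pm j) := by
        apply Finset.prod_nonneg
        intro j _
        simp [unif]
      apply mul_le_mul_of_nonneg_left _ hw
      have hpi : extendProf i (Equiv.refl (Fin n)) pm i = Equiv.refl (Fin n) := by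
        simp [extendProf]
      have hswap' : IsSwap (extendProf i (Equiv.refl (Fin n)) pm i) (Equiv.swap a b) a b := by
        rw [hpi]; exact hswap
      have := (hM (extendProf i (Equiv.refl (Fin n)) pm) i (Equiv.swap a b) a b hswap').1
      rwa [update_extendProf] at this
    have e1 : interim Q (unif n) i (Equiv.refl (Fin n)) b = f b := by
      rw [hrank]; simp
    have e2 : interim Q (unif n) i (Equiv.swap a b) b = f a := by
      rw [hrank]; simp
    rw [e1, e2] at hmono
    exact hmono
  -- antitonicity of f
  have hanti : ∀ j k : Fin n, j ≤ k → f k ≤ f j := by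
    have key : ∀ (d : ℕ) (j : Fin n) (h : j.val + d < n), f ⟨j.val + d, h⟩ ≤ f j := by
      intro d
      induction d with
      | zero => intro j h; simp
      | succ d ih =>
          intro j h
          have h' : j.val + d < n := by omega
          have h1 := hstep ⟨j.val + d, h'⟩ (by omega)
          have h2 := ih j h'
          calc f ⟨j.val + (d + 1), h⟩ = f ⟨(j.val + d) + 1, by omega⟩ := by
                rfl
           _ ≤ f ⟨j.val + d, h'⟩ := h1
           _ ≤ f j := h2
    intro j k hjk
    have hk : k = ⟨j.val + (k.val - j.val), by omega⟩ := by
      apply Fin.ext; simp; omega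
    rw [hk]
    exact key _ j _
  -- combinatorial lemma
  have hsum : ∀ (S : Finset (Fin n)) (ℓ : Fin n), S.card = (Iic ℓ).card →
      ∑ m ∈ S, f m ≤ ∑ m ∈ Iic ℓ, f m := by
    intro S ℓ hcard
    set T := Iic ℓ with hT
    have h1 : ∑ m ∈ S ∩ T, f m + ∑ m ∈ S \ T, f m = ∑ m ∈ S, f m :=
      Finset.sum_inter_add_sum_sdiff S T f
    have h2 : ∑ m ∈ T ∩ S, f m + ∑ m ∈ T \ S, f m = ∑ m ∈ T, f m :=
      Finset.sum_inter_add_sum_sdiff T S f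
    have hc1 : (S \ T).card + (S ∩ T).card = S.card := Finset.card_sdiff_add_card_inter S T
    have hc2 : (T \ S).card + (T ∩ S).card = T.card := Finset.card_sdiff_add_card_inter T S
    have hic : (S ∩ T).card = (T ∩ S).card := by rw [Finset.inter_comm]
    have hcd : (S \ T).card = (T \ S).card := by omega
    have hA : ∑ m ∈ S \ T, f m ≤ (S \ T).card • f ℓ := by
      apply Finset.sum_le_card_nsmul
      intro x hx
      have hx' : x ∉ T := (Finset.mem_sdiff.1 hx).2
      have : ℓ < x := by
        by_contra hcon
        exact hx' (Finset.mem_Iic.2 (not_lt.1 hcon))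
      exact hanti ℓ x (le_of_lt this)
    have hB : (T \ S).card • f ℓ ≤ ∑ m ∈ T \ S, f m := by
      apply Finset.card_nsmul_le_sum
      intro x hx
      have hx' : x ∈ T := (Finset.mem_sdiff.1 hx).1
      exact hanti x ℓ (Finset.mem_Iic.1 hx')
    have hie : ∑ m ∈ S ∩ T, f m = ∑ m ∈ T ∩ S, f m := by rw [Finset.inter_comm]
    have := hcd ▸ hA
    linarith [hA, hB, hcd ▸ hA]
  -- conclude
  intro ℓ
  have hR : ∀ k : Fin n, interim Q (unif n) i Pi (Pi k) = f k := by
    intro k; rw [hrank]; simp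
  have hL : ∀ k : Fin n, interim Q (unif n) i P' (Pi k) = f (P'.symm (Pi k)) := by
    intro k; rw [hrank]
  calc ∑ k ∈ Iic ℓ, interim Q (unif n) i P' (Pi k)
      = ∑ k ∈ Iic ℓ, f (P'.symm (Pi k)) := by
        apply Finset.sum_congr rfl; intro k _; exact hL k
    _ = ∑ m ∈ (Iic ℓ).image (fun k => P'.symm (Pi k)), f m := by
        rw [Finset.sum_image]
        intro x _ y _ hxy
        exact Pi.injective (P'.symm.injective hxy)
    _ ≤ ∑ m ∈ Iic ℓ, f m := by
        apply hsum
        apply Finset.card_image_of_injective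
        intro x y hxy
        exact Pi.injective (P'.symm.injective hxy)
    _ = ∑ k ∈ Iic ℓ, interim Q (unif n) i Pi (Pi k) := by
        apply Finset.sum_congr rfl; intro k _; exact (hR k).symm
end

section
/- A mechanism Q is OBIC with respect to a prior μ if and only if its interim shares satisfy interim elementary monotonicity, interim upper invariance, and interim lower invariance. -/
open Finset

section Helpers
variable {n : ℕ}

/-- Number of inversions of a permutation of `Fin n`. -/
def invCount (f : Pref n) : ℕ :=
  (Finset.univ.filter (fun p : Fin n × Fin n => p.1 < p.2 ∧ f p.2 < f p.1)).card

lemma swap_lt {k k1 : Fin n} (hkk : k1.val = k.val + 1) {p1 p2 : Fin n}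
    (hlt : p1 < p2) (hne : ¬(p1 = k ∧ p2 = k1)) :
    Equiv.swap k k1 p1 < Equiv.swap k k1 p2 := by
  simp only [Equiv.swap_apply_def]
  rw [Fin.lt_def] at hlt
  simp only [Fin.ext_iff, not_and] at hne
  split_ifs <;>
    simp only [Fin.ext_iff, Fin.lt_def, not_and] at * <;>
    omega

lemma invCount_swap (f : Pref n) {k k1 : Fin n} (hkk : k1.val = k.val + 1)
    (hinv : f k1 < f k) :
    invCount ((Equiv.swap k k1).trans f) + 1 = invCount f := by
  classical
  set s := Equiv.swap k k1 with hs
  have hkk1 : k < k1 := by rw [Fin.lt_def]; omega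
  have hmem : (k, k1) ∈ Finset.univ.filter
      (fun p : Fin n × Fin n => p.1 < p.2 ∧ f p.2 < f p.1) := by
    simp [hkk1, hinv]
  have hcard : invCount ((Equiv.swap k k1).trans f) =
      ((Finset.univ.filter (fun p : Fin n × Fin n => p.1 < p.2 ∧ f p.2 < f p.1)).erase
        (k, k1)).card := by
    unfold invCount
    apply Finset.card_bij' (fun p _ => (s p.1, s p.2)) (fun q _ => (s q.1, s q.2))
    · intro p hp
      rw [Finset.mem_filter] at hp
      simp only [Finset.mem_univ, true_and, Equiv.trans_apply] at hp
      have hne : ¬(p.1 = k ∧ p.2 = k1) := by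
        rintro ⟨h1, h2⟩
        rw [h1, h2] at hp
        have : f k < f k1 := by simpa [hs] using hp.2
        exact absurd hinv this.asymm
      refine Finset.mem_erase.mpr ⟨?_, ?_⟩
      · intro hq
        have h1 : s p.1 = k := congrArg Prod.fst hq
        have h2 : s p.2 = k1 := congrArg Prod.snd hq
        have e1 : p.1 = k1 := by
          apply (Equiv.swap k k1).injective
          rw [h1]; simp [hs]
        have e2 : p.2 = k := by
          apply (Equiv.swap k k1).injective
          rw [h2]; simp [hs]
        rw [e1, e2] at hp
        exact absurd hp.1 hkk1.asymm
      · simp only [Finset.mem_filter, Finset.mem_univ, true_and]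
        exact ⟨swap_lt hkk hp.1 hne, hp.2⟩
    · intro q hq
      rw [Finset.mem_erase] at hq
      obtain ⟨hne', hq⟩ := hq
      simp only [Finset.mem_filter, Finset.mem_univ, true_and] at hq
      have hne : ¬(q.1 = k ∧ q.2 = k1) := by
        rintro ⟨h1, h2⟩
        exact hne' (Prod.ext_iff.mpr ⟨h1, h2⟩)
      rw [Finset.mem_filter]
      simp only [Finset.mem_univ, true_and, Equiv.trans_apply]
      refine ⟨swap_lt hkk hq.1 hne, ?_⟩
      simpa [hs] using hq.2
    · intro p hp; simp [hs]
    · intro q hq; simp [hs]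
  rw [hcard, Finset.card_erase_add_one hmem]
  rfl

lemma mono_of_no_adj (f : Pref n)
    (h : ∀ (k : Fin n) (hk : k.val + 1 < n), f k ≤ f ⟨k.val + 1, hk⟩) :
    ∀ (m : ℕ) (hm : m < n) (j : Fin n), j.val ≤ m → f j ≤ f ⟨m, hm⟩ := by
  intro m
  induction m with
  | zero =>
    intro hm j hle
    have : j = ⟨0, hm⟩ := Fin.ext (show j.val = 0 by omega)
    rw [this]
  | succ m ih =>
    intro hm j hle
    rcases Nat.lt_or_ge j.val (m + 1) with h1 | h1
    · have hmn : m < n := by omega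
      exact le_trans (ih hmn j (by omega)) (h ⟨m, hmn⟩ hm)
    · have : j = ⟨m + 1, hm⟩ := Fin.ext (show j.val = m + 1 by omega)
      rw [this]

lemma exists_adj_of_invCount_ne (f : Pref n) (h : invCount f ≠ 0) :
    ∃ (k : Fin n) (hk : k.val + 1 < n), f ⟨k.val + 1, hk⟩ < f k := by
  by_contra hc
  push_neg at hc
  apply h
  rw [invCount, Finset.card_eq_zero, Finset.filter_eq_empty_iff]
  rintro p - ⟨hlt, hinv⟩
  have := mono_of_no_adj f hc p.2.val p.2.isLt p.1 (by rw [Fin.lt_def] at hlt; omega)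
  rw [Fin.eta] at this
  exact absurd hinv (not_lt.mpr (show f p.1 ≤ f p.2 from this))

lemma eq_refl_of_invCount_zero (f : Pref n) (h : invCount f = 0) : f = Equiv.refl _ := by
  have hmono : ∀ j1 j2 : Fin n, j1 < j2 → f j1 < f j2 := by
    intro j1 j2 hlt
    have hnot : ¬ f j2 < f j1 := by
      intro hbad
      have hmem : (j1, j2) ∈ Finset.univ.filter
          (fun p : Fin n × Fin n => p.1 < p.2 ∧ f p.2 < f p.1) := by simp [hlt, hbad]
      rw [invCount, Finset.card_eq_zero] at h
      rw [h] at hmem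
      exact absurd hmem (Finset.notMem_empty _)
    rcases lt_or_ge (f j1) (f j2) with h' | h'
    · exact h'
    · have : f j2 = f j1 := le_antisymm h' (not_lt.mp hnot)
      exact absurd (f.injective this) (ne_of_lt hlt).symm
  have hge : ∀ (m : ℕ) (hm : m < n), ((⟨m, hm⟩ : Fin n)).val ≤ (f ⟨m, hm⟩).val := by
    intro m
    induction m with
    | zero => intro hm; exact Nat.zero_le _
    | succ m ih =>
      intro hm
      have hmn : m < n := by omega
      have h1 : f ⟨m, hmn⟩ < f ⟨m + 1, hm⟩ :=
        hmono _ _ (by rw [Fin.lt_def]; exact Nat.lt_succ_self m)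
      have h2 := ih hmn
      rw [Fin.lt_def] at h1
      have h2' : m ≤ (f ⟨m, hmn⟩).val := h2
      show m + 1 ≤ (f ⟨m + 1, hm⟩).val
      omega
  have hsum : ∑ j : Fin n, (j : Fin n).val = ∑ j : Fin n, (f j).val :=
    (Equiv.sum_comp f (fun x : Fin n => x.val)).symm
  have hle : ∀ j ∈ Finset.univ, (j : Fin n).val ≤ (f j).val := by
    intro j _
    have := hge j.val j.isLt
    simpa using this
  have := (Finset.sum_eq_sum_iff_of_le hle).mp hsum
  apply Equiv.ext
  intro j
  exact (Fin.ext (this j (Finset.mem_univ j)).symm :)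

lemma swap_mem_Iic {k k1 ℓ : Fin n} (hkk : k1.val = k.val + 1) (hℓ : ℓ ≠ k)
    {i : Fin n} (hi : i ≤ ℓ) : Equiv.swap k k1 i ≤ ℓ := by
  rw [Ne, Fin.ext_iff] at hℓ
  rw [Fin.le_def] at hi ⊢
  by_cases h1 : i = k
  · rw [h1, Equiv.swap_apply_left]
    rw [h1] at hi
    omega
  · by_cases h2 : i = k1
    · rw [h2, Equiv.swap_apply_right]
      rw [h2] at hi
      omega
    · rw [Equiv.swap_apply_of_ne_of_ne h1 h2]
      exact hi

lemma prefix_swap (P : Pref n) (k k1 : Fin n) (hkk : k1.val = k.val + 1)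
    (π : Fin n → ℝ) {ℓ : Fin n} (hℓ : ℓ ≠ k) :
    ∑ j ∈ Finset.Iic ℓ, π (((Equiv.swap k k1).trans P) j)
      = ∑ j ∈ Finset.Iic ℓ, π (P j) := by
  apply Finset.sum_equiv (Equiv.swap k k1)
  · intro i
    simp only [Finset.mem_Iic]
    constructor
    · exact fun h => swap_mem_Iic hkk hℓ h
    · intro h
      have := swap_mem_Iic hkk hℓ h
      rwa [Equiv.swap_apply_self] at this
  · intro i _
    rfl

lemma prefix_swap' (P P' : Pref n) (k k1 : Fin n) (hkk : k1.val = k.val + 1)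
    (hpt : ∀ j, P' j = P (Equiv.swap k k1 j))
    (π : Fin n → ℝ) {ℓ : Fin n} (hℓ : ℓ ≠ k) :
    ∑ j ∈ Finset.Iic ℓ, π (P' j) = ∑ j ∈ Finset.Iic ℓ, π (P j) := by
  calc ∑ j ∈ Finset.Iic ℓ, π (P' j)
      = ∑ j ∈ Finset.Iic ℓ, π (((Equiv.swap k k1).trans P) j) :=
        Finset.sum_congr rfl (fun j _ => by rw [hpt j]; rfl)
    _ = _ := prefix_swap P k k1 hkk π hℓ

lemma sum_Iic_split (g : Fin n → ℝ) (m : Fin n) :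
    ∑ j ∈ Finset.Iic m, g j = g m + ∑ j ∈ Finset.Iio m, g j := by
  rw [← Finset.Iio_insert, Finset.sum_insert (by simp)]

lemma isSwap_eq {P P' : Pref n} {a b : Fin n} (h : IsSwap P P' a b) :
    ∃ (k : Fin n) (hk : k.val + 1 < n),
      P k = a ∧ P ⟨k.val + 1, hk⟩ = b ∧
      ∀ j, P' j = P (Equiv.swap k ⟨k.val + 1, hk⟩ j) := by
  obtain ⟨k, hk, h1, h2, h3, h4, h5⟩ := h
  refine ⟨k, hk, h1, h2, ?_⟩
  intro j
  rcases eq_or_ne j k with rfl | hjk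
  · rw [Equiv.swap_apply_left, h2, h3]
  rcases eq_or_ne j ⟨k.val + 1, hk⟩ with rfl | hjk1
  · rw [Equiv.swap_apply_right, h1, h4]
  · rw [h5 j hjk hjk1, Equiv.swap_apply_of_ne_of_ne hjk hjk1]

lemma interim_sum (Q : Mech n) (hQ : Bistochastic Q) (μ : Pref n → ℝ)
    (hμ : IsDist μ) (i : Fin n) (Pi : Pref n) : ∑ x, interim Q μ i Pi x = 1 := by
  classical
  unfold interim
  rw [Finset.sum_comm]
  have h1 : ∀ pm : {j : Fin n // j ≠ i} → Pref n,
      ∑ x, (∏ j, μ (pm j)) * Q (extendProf i Pi pm) i x = ∏ j, μ (pm j) := by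
    intro pm
    rw [← Finset.mul_sum, (hQ (extendProf i Pi pm)).2.1 i, mul_one]
  rw [Finset.sum_congr rfl fun pm _ => h1 pm]
  have h2 := Finset.prod_univ_sum
    (fun _ : {j : Fin n // j ≠ i} => (Finset.univ : Finset (Pref n)))
    (fun _ p => μ p)
  rw [Fintype.piFinset_univ] at h2
  rw [← h2]
  simp [hμ.2]

end Helpers

theorem stmt10 {n : ℕ} (Q : Mech n) (hQ : Bistochastic Q)
    (μ : Pref n → ℝ) (hμ : IsDist μ) :
    OBIC Q μ ↔
      ((∀ (i : Fin n) (Pi P' : Pref n) (a b : Fin n), IsSwap Pi P' a b →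
          interim Q μ i Pi b ≤ interim Q μ i P' b ∧
          interim Q μ i P' a ≤ interim Q μ i Pi a) ∧
       (∀ (i : Fin n) (Pi P' : Pref n) (a b : Fin n), IsSwap Pi P' a b →
          ∀ x : Fin n, Pi.symm x < Pi.symm a →
            interim Q μ i P' x = interim Q μ i Pi x) ∧
       (∀ (i : Fin n) (Pi P' : Pref n) (a b : Fin n), IsSwap Pi P' a b →
          ∀ x : Fin n, Pi.symm b < Pi.symm x →
            interim Q μ i P' x = interim Q μ i Pi x)) := by
  classical
  constructor
  · -- forward direction
    intro hOB
    have key : ∀ (i : Fin n) (Pi P' : Pref n) (a b : Fin n), IsSwap Pi P' a b →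
        (interim Q μ i Pi b ≤ interim Q μ i P' b ∧
         interim Q μ i P' a ≤ interim Q μ i Pi a) ∧
        (∀ x : Fin n, Pi.symm x < Pi.symm a →
          interim Q μ i P' x = interim Q μ i Pi x) ∧
        (∀ x : Fin n, Pi.symm b < Pi.symm x →
          interim Q μ i P' x = interim Q μ i Pi x) := by
      intro i Pi P' a b hsw
      obtain ⟨k, hk, hPa, hPb, hpt⟩ := isSwap_eq hsw
      set k1 : Fin n := ⟨k.val + 1, hk⟩ with hk1def
      have hk1v : k1.val = k.val + 1 := by rw [hk1def]
      have hf1 : ∀ ℓ : Fin n, ∑ j ∈ Finset.Iic ℓ, interim Q μ i P' (Pi j)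
          ≤ ∑ j ∈ Finset.Iic ℓ, interim Q μ i Pi (Pi j) := hOB i Pi P'
      have hf2 : ∀ ℓ : Fin n, ∑ j ∈ Finset.Iic ℓ, interim Q μ i Pi (P' j)
          ≤ ∑ j ∈ Finset.Iic ℓ, interim Q μ i P' (P' j) := hOB i P' Pi
      have hSa : Pi.symm a = k := by rw [← hPa, Equiv.symm_apply_apply]
      have hSb : Pi.symm b = k1 := by rw [← hPb, Equiv.symm_apply_apply]
      have hpre : ∀ ℓ : Fin n, ℓ ≠ k →
          ∑ j ∈ Finset.Iic ℓ, interim Q μ i P' (Pi j)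
            = ∑ j ∈ Finset.Iic ℓ, interim Q μ i Pi (Pi j) := by
        intro ℓ hℓ
        refine le_antisymm (hf1 ℓ) ?_
        have h2 := hf2 ℓ
        rwa [prefix_swap' Pi P' k k1 hk1v hpt _ hℓ,
          prefix_swap' Pi P' k k1 hk1v hpt _ hℓ] at h2
      have hIio : ∀ m : Fin n, (m.val ≤ k.val ∨ k.val + 1 < m.val) →
          ∑ j ∈ Finset.Iio m, interim Q μ i P' (Pi j)
            = ∑ j ∈ Finset.Iio m, interim Q μ i Pi (Pi j) := by
        intro m hm
        rcases Nat.eq_zero_or_pos m.val with h0 | h0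
        · have he : Finset.Iio m = ∅ := by
            ext j
            simp only [Finset.mem_Iio, Fin.lt_def, h0, Finset.notMem_empty, iff_false,
              not_lt]
            omega
          rw [he]; rfl
        · have hm1 : m.val - 1 < n := by omega
          have heq : Finset.Iio m = Finset.Iic ⟨m.val - 1, hm1⟩ := by
            ext j
            simp only [Finset.mem_Iio, Finset.mem_Iic, Fin.lt_def, Fin.le_def]
            omega
          rw [heq]
          apply hpre
          intro hc
          have hcv : m.val - 1 = k.val := congrArg Fin.val hc
          omega
      have hptlt : ∀ j : Fin n, j < k → P' j = Pi j := by
        intro j hj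
        rw [hpt j, Equiv.swap_apply_of_ne_of_ne (ne_of_lt hj) ?_]
        intro hc
        have hcv : j.val = k.val + 1 := congrArg Fin.val hc
        rw [Fin.lt_def] at hj
        omega
      have hpoint : ∀ m : Fin n, m ≠ k → (m.val ≤ k.val ∨ k.val + 1 < m.val) →
          interim Q μ i P' (Pi m) = interim Q μ i Pi (Pi m) := by
        intro m hmk hm2
        have e1 := hpre m hmk
        have e2 := hIio m hm2
        have d1 := sum_Iic_split (fun j => interim Q μ i P' (Pi j)) m
        have d2 := sum_Iic_split (fun j => interim Q μ i Pi (Pi j)) m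
        linarith
      refine ⟨⟨?_, ?_⟩, ?_, ?_⟩
      · -- interim Pi b ≤ interim P' b
        have h2 := hf2 k
        have d1 := sum_Iic_split (fun j => interim Q μ i Pi (P' j)) k
        have d2 := sum_Iic_split (fun j => interim Q μ i P' (P' j)) k
        have hP'k : P' k = b := by
          rw [hpt k, Equiv.swap_apply_left]
          exact hPb
        rw [hP'k] at d1 d2
        have hc1 : ∑ j ∈ Finset.Iio k, interim Q μ i Pi (P' j)
            = ∑ j ∈ Finset.Iio k, interim Q μ i Pi (Pi j) :=
          Finset.sum_congr rfl fun j hj => by rw [hptlt j (Finset.mem_Iio.mp hj)]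
        have hc2 : ∑ j ∈ Finset.Iio k, interim Q μ i P' (P' j)
            = ∑ j ∈ Finset.Iio k, interim Q μ i P' (Pi j) :=
          Finset.sum_congr rfl fun j hj => by rw [hptlt j (Finset.mem_Iio.mp hj)]
        have e2 := hIio k (Or.inl le_rfl)
        rw [d1, d2, hc1, hc2] at h2
        linarith
      · -- interim P' a ≤ interim Pi a
        have h1 := hf1 k
        have d1 := sum_Iic_split (fun j => interim Q μ i P' (Pi j)) k
        have d2 := sum_Iic_split (fun j => interim Q μ i Pi (Pi j)) k
        rw [hPa] at d1 d2
        have e2 := hIio k (Or.inl le_rfl)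
        rw [d1, d2] at h1
        linarith
      · -- upper invariance
        intro x hx
        rw [hSa] at hx
        have hm2 : (Pi.symm x).val ≤ k.val := le_of_lt (by rw [Fin.lt_def] at hx; exact hx)
        have := hpoint (Pi.symm x) (ne_of_lt hx) (Or.inl hm2)
        rwa [Equiv.apply_symm_apply] at this
      · -- lower invariance
        intro x hx
        rw [hSb] at hx
        have hm2 : k.val + 1 < (Pi.symm x).val := by
          rw [Fin.lt_def] at hx
          omega
        have hxk : Pi.symm x ≠ k := by
          intro hc
          rw [hc] at hm2
          omega
        have := hpoint (Pi.symm x) hxk (Or.inr hm2)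
        rwa [Equiv.apply_symm_apply] at this
    exact ⟨fun i Pi P' a b hsw => (key i Pi P' a b hsw).1,
      fun i Pi P' a b hsw => (key i Pi P' a b hsw).2.1,
      fun i Pi P' a b hsw => (key i Pi P' a b hsw).2.2⟩
  · -- reverse direction
    rintro ⟨hm, hu, hl⟩
    intro i Pi P'
    have hbase : ∀ R : Pref n, invCount (R.trans Pi.symm) = 0 →
        FOSD Pi (interim Q μ i Pi) (interim Q μ i R) := by
      intro R h0
      have h0' : R.trans Pi.symm = Equiv.refl _ := eq_refl_of_invCount_zero _ h0
      have hPP : R = Pi := by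
        apply Equiv.ext
        intro j
        have h1 : Pi.symm (R j) = j := by
          have := Equiv.ext_iff.mp h0' j
          simpa using this
        have h2 := congrArg Pi h1
        rwa [Equiv.apply_symm_apply] at h2
      rw [hPP]
      intro ℓ
      exact le_rfl
    suffices H : ∀ (N : ℕ) (R : Pref n), invCount (R.trans Pi.symm) ≤ N →
        FOSD Pi (interim Q μ i Pi) (interim Q μ i R) from H _ P' le_rfl
    intro N
    induction N with
    | zero => exact fun R hR => hbase R (Nat.le_zero.mp hR)
    | succ N ih =>
      intro R hR
      by_cases h0 : invCount (R.trans Pi.symm) = 0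
      · exact hbase R h0
      obtain ⟨k, hk1, hadj⟩ := exists_adj_of_invCount_ne _ h0
      set k1 : Fin n := ⟨k.val + 1, hk1⟩ with hk1def
      have hk1v : k1.val = k.val + 1 := by rw [hk1def]
      set P'' : Pref n := (Equiv.swap k k1).trans R with hP''def
      set a : Fin n := R k1 with hadef
      set b : Fin n := R k with hbdef
      have hkk1 : k ≠ k1 := by
        intro hc
        have : k.val = k.val + 1 := congrArg Fin.val hc
        omega
      have hab : a ≠ b := by
        intro hc
        have hc' : R k1 = R k := hc
        exact hkk1 (R.injective hc').symm
      have hswP : IsSwap P'' R a b := by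
        refine ⟨k, hk1, ?_, ?_, rfl, rfl, ?_⟩
        · show ((Equiv.swap k k1).trans R) k = a
          rw [Equiv.trans_apply, Equiv.swap_apply_left]
        · show ((Equiv.swap k k1).trans R) ⟨k.val + 1, hk1⟩ = b
          rw [Equiv.trans_apply]
          rw [show (⟨k.val + 1, hk1⟩ : Fin n) = k1 from rfl, Equiv.swap_apply_right]
        · intro j hj hj1
          show R j = ((Equiv.swap k k1).trans R) j
          rw [Equiv.trans_apply, Equiv.swap_apply_of_ne_of_ne hj hj1]
      have hdec : invCount (P''.trans Pi.symm) + 1 = invCount (R.trans Pi.symm) := by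
        have hassoc : P''.trans Pi.symm = (Equiv.swap k k1).trans (R.trans Pi.symm) := by
          rw [hP''def, Equiv.trans_assoc]
        rw [hassoc]
        exact invCount_swap _ hk1v hadj
      have hq'' : FOSD Pi (interim Q μ i Pi) (interim Q μ i P'') :=
        ih P'' (by omega)
      have hP''symm : ∀ x : Fin n, P''.symm x = Equiv.swap k k1 (R.symm x) := by
        intro x
        rw [hP''def]
        simp [Equiv.symm_trans_apply]
      have hsa : P''.symm a = k := by
        rw [hP''symm, hadef, Equiv.symm_apply_apply, Equiv.swap_apply_right]
      have hsb : P''.symm b = k1 := by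
        rw [hP''symm, hbdef, Equiv.symm_apply_apply, Equiv.swap_apply_left]
      have hoff : ∀ x : Fin n, x ≠ a → x ≠ b →
          interim Q μ i R x = interim Q μ i P'' x := by
        intro x hxa hxb
        have hx1 : R.symm x ≠ k1 := by
          intro hc
          have h2 := congrArg R hc
          rw [Equiv.apply_symm_apply] at h2
          exact hxa h2
        have hx2 : R.symm x ≠ k := by
          intro hc
          have h2 := congrArg R hc
          rw [Equiv.apply_symm_apply] at h2
          exact hxb h2
        have hfix : P''.symm x = R.symm x := by
          rw [hP''symm, Equiv.swap_apply_of_ne_of_ne hx2 hx1]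
        have htri : P''.symm x < k ∨ k1 < P''.symm x := by
          rw [hfix, Fin.lt_def, Fin.lt_def]
          have e1 : (R.symm x).val ≠ k.val := fun hc => hx2 (Fin.ext hc)
          have e2 : (R.symm x).val ≠ k.val + 1 := fun hc => hx1 (Fin.ext (by rw [hc, hk1v]))
          omega
        rcases htri with h | h
        · exact hu i P'' R a b hswP x (by rw [hsa]; exact h)
        · exact hl i P'' R a b hswP x (by rw [hsb]; exact h)
      have hmono := hm i P'' R a b hswP
      have hsump : interim Q μ i R a + interim Q μ i R b
          = interim Q μ i P'' a + interim Q μ i P'' b := by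
        have h1 : ∑ x, interim Q μ i R x = ∑ x, interim Q μ i P'' x := by
          rw [interim_sum Q hQ μ hμ i R, interim_sum Q hQ μ hμ i P'']
        have h2 : ∑ x, (interim Q μ i R x - interim Q μ i P'' x) = 0 := by
          rw [Finset.sum_sub_distrib, h1, sub_self]
        have h3 : ∑ x, (interim Q μ i R x - interim Q μ i P'' x)
            = ∑ x ∈ ({a, b} : Finset (Fin n)),
                (interim Q μ i R x - interim Q μ i P'' x) := by
          refine (Finset.sum_subset (Finset.subset_univ _) ?_).symm
          intro x _ hx
          simp only [Finset.mem_insert, Finset.mem_singleton, not_or] at hx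
          rw [hoff x hx.1 hx.2, sub_self]
        rw [h3, Finset.sum_pair hab] at h2
        linarith
      intro ℓ
      refine le_trans ?_ (hq'' ℓ)
      have hka : Pi.symm a < Pi.symm b := hadj
      have hterm : ∀ j : Fin n, interim Q μ i R (Pi j) - interim Q μ i P'' (Pi j)
          = (if j = Pi.symm a then interim Q μ i R a - interim Q μ i P'' a else 0)
          + (if j = Pi.symm b then interim Q μ i R b - interim Q μ i P'' b else 0) := by
        intro j
        by_cases hja : j = Pi.symm a
        · rw [hja, Equiv.apply_symm_apply, if_pos rfl, if_neg (ne_of_lt hka), add_zero]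
        · by_cases hjb : j = Pi.symm b
          · rw [hjb, Equiv.apply_symm_apply, if_neg (ne_of_gt hka), if_pos rfl, zero_add]
          · have h1 : Pi j ≠ a := fun hc => hja (by rw [← hc, Equiv.symm_apply_apply])
            have h2 : Pi j ≠ b := fun hc => hjb (by rw [← hc, Equiv.symm_apply_apply])
            rw [hoff _ h1 h2, sub_self, if_neg hja, if_neg hjb, add_zero]
      have hdiff : ∑ j ∈ Finset.Iic ℓ,
            (interim Q μ i R (Pi j) - interim Q μ i P'' (Pi j))
          = (if Pi.symm a ∈ Finset.Iic ℓ
              then interim Q μ i R a - interim Q μ i P'' a else 0)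
          + (if Pi.symm b ∈ Finset.Iic ℓ
              then interim Q μ i R b - interim Q μ i P'' b else 0) := by
        rw [Finset.sum_congr rfl fun j _ => hterm j, Finset.sum_add_distrib,
          Finset.sum_ite_eq' (Finset.Iic ℓ) (Pi.symm a),
          Finset.sum_ite_eq' (Finset.Iic ℓ) (Pi.symm b)]
      have hsle : ∑ j ∈ Finset.Iic ℓ,
          (interim Q μ i R (Pi j) - interim Q μ i P'' (Pi j)) ≤ 0 := by
        rw [hdiff]
        by_cases hb : Pi.symm b ∈ Finset.Iic ℓ
        · have ha : Pi.symm a ∈ Finset.Iic ℓ :=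
            Finset.mem_Iic.mpr (le_of_lt (lt_of_lt_of_le hka (Finset.mem_Iic.mp hb)))
          rw [if_pos ha, if_pos hb]
          linarith
        · by_cases ha : Pi.symm a ∈ Finset.Iic ℓ
          · rw [if_pos ha, if_neg hb, add_zero]
            linarith [hmono.2]
          · rw [if_neg ha, if_neg hb, add_zero]
      have hexp : ∑ j ∈ Finset.Iic ℓ, interim Q μ i R (Pi j)
          = ∑ j ∈ Finset.Iic ℓ, interim Q μ i P'' (Pi j)
            + ∑ j ∈ Finset.Iic ℓ,
                (interim Q μ i R (Pi j) - interim Q μ i P'' (Pi j)) := by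
        rw [Finset.sum_sub_distrib]
        ring
      linarith [hexp, hsle]
end

section
/- Let Q be a mechanism satisfying ex-post upper invariance, ex-post lower invariance, and elementary monotonicity. Then for every agent i, every P_{-i}, and every (a,b)-swap P'_i of P_i, the share vectors satisfy both Q_i(P_i,P_{-i}) FOSD Q_i(P'_i,P_{-i}) with respect to P_i and Q_i(P'_i,P_{-i}) FOSD Q_i(P_i,P_{-i}) with respect to P'_i. -/
open Finset

lemma sum_two {n : ℕ} (P : Fin n ≃ Fin n) (k k1 : Fin n) (hkk : k ≠ k1) (f : Fin n → ℝ)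
    (h0 : ∀ j, j ≠ k → j ≠ k1 → f (P j) = 0) (ℓ : Fin n) :
    ∑ j ∈ Iic ℓ, f (P j) =
      (if k ≤ ℓ then f (P k) else 0) + (if k1 ≤ ℓ then f (P k1) else 0) := by
  have : ∀ j ∈ Iic ℓ, f (P j) =
      (if j = k then f (P k) else 0) + (if j = k1 then f (P k1) else 0) := by
    intro j _
    by_cases h1 : j = k
    · subst h1; simp [hkk]
    · by_cases h2 : j = k1
      · subst h2; simp [Ne.symm hkk, h1]
      · simp [h1, h2, h0 j h1 h2]
  rw [Finset.sum_congr rfl this, Finset.sum_add_distrib, Finset.sum_ite_eq',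
    Finset.sum_ite_eq']
  simp [Finset.mem_Iic]


theorem stmt17 {n : ℕ} (Q : Mech n) (hQ : Bistochastic Q)
    (hUI : ∀ (prof : Fin n → Pref n) (i : Fin n) (P' : Pref n) (a b : Fin n),
      IsSwap (prof i) P' a b →
      ∀ x : Fin n, (prof i).symm x < (prof i).symm a →
        Q (Function.update prof i P') i x = Q prof i x)
    (hLI : ∀ (prof : Fin n → Pref n) (i : Fin n) (P' : Pref n) (a b : Fin n),
      IsSwap (prof i) P' a b →
      ∀ x : Fin n, (prof i).symm b < (prof i).symm x →
        Q (Function.update prof i P') i x = Q prof i x)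
    (hEM : ElemMono Q) :
    ∀ (prof : Fin n → Pref n) (i : Fin n) (P' : Pref n) (a b : Fin n),
      IsSwap (prof i) P' a b →
      FOSD (prof i) (Q prof i) (Q (Function.update prof i P') i) ∧
      FOSD P' (Q (Function.update prof i P') i) (Q prof i) := by
  intro prof i P' a b hsw
  obtain ⟨k, hk, hPa, hPb, hP'b, hP'a, hoth⟩ := hsw
  set k1 : Fin n := ⟨k.val + 1, hk⟩ with hk1def
  set P := prof i
  set Qo := Q prof i
  set Qn := Q (Function.update prof i P') i
  have hkk : k ≠ k1 := by
    intro h; have := congrArg Fin.val h; simp [hk1def] at this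
  have hab : a ≠ b := by
    intro h; apply hkk
    have : P k = P k1 := by rw [hPa, hPb, h]
    exact P.injective this
  have hsa : P.symm a = k := by rw [← hPa]; exact P.symm_apply_apply k
  have hsb : P.symm b = k1 := by rw [← hPb]; exact P.symm_apply_apply k1
  have heq : ∀ x, x ≠ a → x ≠ b → Qn x = Qo x := by
    intro x hxa hxb
    have hjk : (P.symm x) ≠ k := by
      intro h; apply hxa; rw [← hPa, ← h, P.apply_symm_apply]
    have hjk1 : (P.symm x) ≠ k1 := by
      intro h; apply hxb; rw [← hPb, ← h, P.apply_symm_apply]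
    have hv : (P.symm x).val ≠ k.val := fun h => hjk (Fin.ext h)
    have hv1 : (P.symm x).val ≠ k.val + 1 := fun h => hjk1 (Fin.ext h)
    rcases lt_or_gt_of_ne hv with h | h
    · exact hUI prof i P' a b ⟨k, hk, hPa, hPb, hP'b, hP'a, hoth⟩ x
        (by rw [hsa]; exact h)
    · exact hLI prof i P' a b ⟨k, hk, hPa, hPb, hP'b, hP'a, hoth⟩ x
        (by rw [hsb]; show k.val + 1 < (P.symm x).val; omega)
  obtain ⟨hb, ha⟩ := hEM prof i P' a b ⟨k, hk, hPa, hPb, hP'b, hP'a, hoth⟩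
  have hpair : Qo a + Qo b = Qn a + Qn b := by
    have h1 : ∑ x, Qo x = 1 := (hQ prof).2.1 i
    have h2 : ∑ x, Qn x = 1 := (hQ (Function.update prof i P')).2.1 i
    have hmem : b ∈ Finset.univ.erase a := by
      simp [Finset.mem_erase, Ne.symm hab]
    have e1 : ∑ x, Qo x = Qo a + (Qo b + ∑ x ∈ (Finset.univ.erase a).erase b, Qo x) := by
      rw [← Finset.add_sum_erase _ _ (Finset.mem_univ a), ← Finset.add_sum_erase _ _ hmem]
    have e2 : ∑ x, Qn x = Qn a + (Qn b + ∑ x ∈ (Finset.univ.erase a).erase b, Qn x) := by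
      rw [← Finset.add_sum_erase _ _ (Finset.mem_univ a), ← Finset.add_sum_erase _ _ hmem]
    have e3 : ∑ x ∈ (Finset.univ.erase a).erase b, Qn x
        = ∑ x ∈ (Finset.univ.erase a).erase b, Qo x := by
      apply Finset.sum_congr rfl
      intro x hx
      simp [Finset.mem_erase] at hx
      exact heq x hx.2 hx.1
    rw [e1] at h1; rw [e2, e3] at h2; linarith
  have hkle : k ≤ k1 := by simp [Fin.le_def, hk1def]
  constructor
  · intro ℓ
    rw [← sub_nonneg, ← Finset.sum_sub_distrib]
    have := sum_two P k k1 hkk (fun x => Qo x - Qn x)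
      (by
        intro j h1 h2
        have hja : P j ≠ a := fun h => h1 (P.injective (by rw [h, hPa]))
        have hjb : P j ≠ b := fun h => h2 (P.injective (by rw [h, hPb]))
        simp [heq _ hja hjb]) ℓ
    rw [this, hPa, hPb]
    by_cases hc1 : k1 ≤ ℓ
    · rw [if_pos (le_trans hkle hc1), if_pos hc1]; linarith
    · rw [if_neg hc1]
      by_cases hc2 : k ≤ ℓ
      · rw [if_pos hc2]; linarith
      · rw [if_neg hc2]; linarith
  · intro ℓ
    rw [← sub_nonneg, ← Finset.sum_sub_distrib]
    have := sum_two P' k k1 hkk (fun x => Qn x - Qo x)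
      (by
        intro j h1 h2
        have hP'j : P' j = P j := hoth j h1 h2
        have hja : P' j ≠ a := by
          rw [hP'j]; exact fun h => h1 (P.injective (by rw [h, hPa]))
        have hjb : P' j ≠ b := by
          rw [hP'j]; exact fun h => h2 (P.injective (by rw [h, hPb]))
        simp [heq _ hja hjb]) ℓ
    rw [this, hP'a, hP'b]
    by_cases hc1 : k1 ≤ ℓ
    · rw [if_pos (le_trans hkle hc1), if_pos hc1]; linarith
    · rw [if_neg hc1]
      by_cases hc2 : k ≤ ℓ
      · rw [if_pos hc2]; linarith
      · rw [if_neg hc2]; linarith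
end
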